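/- Let W be an isometry on a complex Hilbert space H₀ with WW^* ≠ I, and, on H = H₀ ⊕ H₀ ⊕ H₀, define the block operators S_1 = (1/3)[[I+W, 0, I],[0, W, 0],[I, 0, I+W]], S_2 = (1/3)[[W, 0, I+W],[0,0,0],[I+W, 0, W]] and S_3 = [[0,0,W],[0,0,0],[W,0,0]]. Then: (i) S_1, S_2, S_3 pairwise commute; (ii) S_3 is a partial isometry and P := I − S_3^* S_3 = diag(0, I, 0); (iii) the operators E_1 := diag(0, W/3, 0) and E_2 := 0 satisfy S_1 − S_2^* S_3 = P E_1 P and S_2 − S_1^* S_3 = P E_2 P; and (iv) E_1^*E_1 − E_1E_1^* = (1/9)·diag(0, I − WW^*, 0) ≠ 0 while E_2^*E_2 − E_2E_2^* = 0, so that E_1^*E_1 − E_1E_1^* ≠ E_2^*E_2 − E_2E_2^*. -/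

import Mathlib

open ContinuousLinearMap

/-- The `L²`-direct sum `PiLp 2` of complete spaces is complete (the uniformity agrees with the
product one). -/
instance piLp_two_completeSpace {ι : Type*} [Fintype ι] {H₀ : Type*} [NormedAddCommGroup H₀]
    [CompleteSpace H₀] : CompleteSpace (PiLp 2 fun _ : ι => H₀) :=
  inferInstance

/-- The operator on the Hilbert-space direct sum `H₀ ⊕ H₀ ⊕ H₀` given by a `3 × 3` block matrix
of operators on `H₀`. -/
noncomputable def blk3 {H₀ : Type*} [NormedAddCommGroup H₀] [InnerProductSpace ℂ H₀]
    (M : Matrix (Fin 3) (Fin 3) (H₀ →L[ℂ] H₀)) :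
    PiLp 2 (fun _ : Fin 3 => H₀) →L[ℂ] PiLp 2 (fun _ : Fin 3 => H₀) :=
  ((PiLp.continuousLinearEquiv 2 ℂ (fun _ : Fin 3 => H₀)).symm.toContinuousLinearMap.comp
      (ContinuousLinearMap.pi fun i => ∑ j, (M i j).comp (ContinuousLinearMap.proj j))).comp
    (PiLp.continuousLinearEquiv 2 ℂ (fun _ : Fin 3 => H₀)).toContinuousLinearMap


section Blk3Lemmas

variable {H₀ : Type*} [NormedAddCommGroup H₀] [InnerProductSpace ℂ H₀] [CompleteSpace H₀]

set_option linter.unusedSectionVars false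

lemma blk3_apply (M : Matrix (Fin 3) (Fin 3) (H₀ →L[ℂ] H₀)) (x : PiLp 2 (fun _ : Fin 3 => H₀))
    (i : Fin 3) : blk3 M x i = ∑ j, M i j (x j) := rfl

lemma blk3_mul (M N : Matrix (Fin 3) (Fin 3) (H₀ →L[ℂ] H₀)) :
    blk3 M * blk3 N = blk3 (M * N) := by
  ext x i
  simp only [ContinuousLinearMap.mul_apply, blk3_apply, Matrix.mul_apply,
    ContinuousLinearMap.sum_apply, ContinuousLinearMap.mul_apply, map_sum]
  exact Finset.sum_comm

lemma blk3_one : blk3 (1 : Matrix (Fin 3) (Fin 3) (H₀ →L[ℂ] H₀)) = 1 := by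
  ext x i
  have h : ∀ j, ((1 : Matrix (Fin 3) (Fin 3) (H₀ →L[ℂ] H₀)) i j) (x j)
      = if i = j then x j else 0 := by
    intro j; by_cases h : i = j <;> simp [Matrix.one_apply, h]
  simp [blk3_apply, h]

lemma blk3_zero : blk3 (0 : Matrix (Fin 3) (Fin 3) (H₀ →L[ℂ] H₀)) = 0 := by
  ext x i
  simp [blk3_apply]

lemma blk3_sub (M N : Matrix (Fin 3) (Fin 3) (H₀ →L[ℂ] H₀)) :
    blk3 M - blk3 N = blk3 (M - N) := by
  ext x i
  simp [blk3_apply, Finset.sum_sub_distrib]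

lemma blk3_adjoint (M : Matrix (Fin 3) (Fin 3) (H₀ →L[ℂ] H₀)) :
    ContinuousLinearMap.adjoint (blk3 M)
      = blk3 (fun i j => ContinuousLinearMap.adjoint (M j i)) := by
  symm
  rw [ContinuousLinearMap.eq_adjoint_iff]
  intro x y
  simp only [blk3_apply, PiLp.inner_apply]
  simp only [inner_sum, sum_inner, ContinuousLinearMap.adjoint_inner_left]
  simp only [fun i => blk3_apply (fun i j => adjoint (M j i)) x i, sum_inner,
    ContinuousLinearMap.adjoint_inner_left]
  exact Finset.sum_comm

lemma blk3_entry {M : Matrix (Fin 3) (Fin 3) (H₀ →L[ℂ] H₀)} (h : blk3 M = 0) (i j : Fin 3) :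
    M i j = 0 := by
  ext v
  have h2 := congrArg (fun T : PiLp 2 (fun _ : Fin 3 => H₀) →L[ℂ] PiLp 2 (fun _ : Fin 3 => H₀) =>
    T ((WithLp.equiv 2 (∀ _ : Fin 3, H₀)).symm (Pi.single j v)) i) h
  simp only [blk3_apply, ContinuousLinearMap.zero_apply, Pi.zero_apply] at h2
  have h3 : ∀ k, M i k ((WithLp.equiv 2 (∀ _ : Fin 3, H₀)).symm (Pi.single j v) k)
      = if k = j then M i j v else 0 := by
    intro k
    by_cases hk : k = j <;> simp [WithLp.equiv_symm_apply, PiLp.toLp_apply, Pi.single_apply, hk]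
  rw [Finset.sum_congr rfl fun k _ => h3 k, Finset.sum_ite_eq'] at h2
  simpa using h2

end Blk3Lemmas

set_option maxHeartbeats 2000000 in
set_option synthInstance.maxHeartbeats 400000 in
/-- Example 2 of the paper: for an isometry `W` on `H₀` with `WW* ≠ I`, the block operators
`S₁ = (1/3)[[I+W,0,I],[0,W,0],[I,0,I+W]]`, `S₂ = (1/3)[[W,0,I+W],[0,0,0],[I+W,0,W]]`,
`S₃ = [[0,0,W],[0,0,0],[W,0,0]]` on `H₀ ⊕ H₀ ⊕ H₀` pairwise commute; `S₃` is a partial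
isometry with `P = I − S₃*S₃ = diag(0,I,0)`; the operators `E₁ = diag(0,W/3,0)`, `E₂ = 0`
satisfy the fundamental equations; and `E₁*E₁ − E₁E₁* = (1/9)·diag(0,I−WW*,0) ≠ 0` while
`E₂*E₂ − E₂E₂* = 0`, so `E₁*E₁ − E₁E₁* ≠ E₂*E₂ − E₂E₂*`. -/
theorem stmt_14 {H₀ : Type*} [NormedAddCommGroup H₀] [InnerProductSpace ℂ H₀]
    [CompleteSpace H₀]
    (W : H₀ →L[ℂ] H₀) (hW : adjoint W * W = 1) (hWco : W * adjoint W ≠ 1)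
    (S₁ S₂ S₃ P E₁ E₂ : PiLp 2 (fun _ : Fin 3 => H₀) →L[ℂ] PiLp 2 (fun _ : Fin 3 => H₀))
    (hS₁ : S₁ = (3 : ℂ)⁻¹ • blk3 !![1 + W, 0, 1; 0, W, 0; 1, 0, 1 + W])
    (hS₂ : S₂ = (3 : ℂ)⁻¹ • blk3 !![W, 0, 1 + W; 0, 0, 0; 1 + W, 0, W])
    (hS₃ : S₃ = blk3 !![0, 0, W; 0, 0, 0; W, 0, 0])
    (hP : P = 1 - adjoint S₃ * S₃)
    (hE₁ : E₁ = (3 : ℂ)⁻¹ • blk3 !![0, 0, 0; 0, W, 0; 0, 0, 0])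
    (hE₂ : E₂ = 0) :
    -- (i) the operators pairwise commute
    (S₁ * S₂ = S₂ * S₁ ∧ S₁ * S₃ = S₃ * S₁ ∧ S₂ * S₃ = S₃ * S₂) ∧
    -- (ii) `S₃` is a partial isometry and `P = diag(0, I, 0)`
    (S₃ * adjoint S₃ * S₃ = S₃ ∧ P = blk3 !![0, 0, 0; 0, 1, 0; 0, 0, 0]) ∧
    -- (iii) the fundamental equations hold
    (S₁ - adjoint S₂ * S₃ = P * E₁ * P ∧ S₂ - adjoint S₁ * S₃ = P * E₂ * P) ∧
    -- (iv) the commutator of `E₁` is nonzero while that of `E₂` vanishes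
    (adjoint E₁ * E₁ - E₁ * adjoint E₁ =
        (9 : ℂ)⁻¹ • blk3 !![0, 0, 0; 0, 1 - W * adjoint W, 0; 0, 0, 0] ∧
      adjoint E₁ * E₁ - E₁ * adjoint E₁ ≠ 0 ∧
      adjoint E₂ * E₂ - E₂ * adjoint E₂ = 0 ∧
      adjoint E₁ * E₁ - E₁ * adjoint E₁ ≠ adjoint E₂ * E₂ - E₂ * adjoint E₂) := by
  subst hS₁ hS₂ hS₃ hP hE₁ hE₂
  have hW' : star W * W = 1 := by rwa [ContinuousLinearMap.star_eq_adjoint]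
  have hW2 : ∀ T : H₀ →L[ℂ] H₀, star W * (W * T) = T := by
    intro T; rw [← mul_assoc, hW', one_mul]
  have c3 : (starRingEnd ℂ) (3 : ℂ)⁻¹ = 3⁻¹ := by simp [Complex.conj_ofNat]
  have h9 : (3 : ℂ)⁻¹ * 3⁻¹ = 9⁻¹ := by norm_num
  have adjsmul : ∀ (c : ℂ) (T : PiLp 2 (fun _ : Fin 3 => H₀) →L[ℂ]
      PiLp 2 (fun _ : Fin 3 => H₀)), adjoint (c • T) = (starRingEnd ℂ) c • adjoint T :=
    fun c T => LinearIsometryEquiv.map_smulₛₗ adjoint c T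
  have ssub : ∀ (c : ℂ) (A B : PiLp 2 (fun _ : Fin 3 => H₀) →L[ℂ]
      PiLp 2 (fun _ : Fin 3 => H₀)), c • A - c • B = c • (A - B) :=
    fun c A B => (smul_sub c A B).symm
  have szero : ∀ c : ℂ, c • (0 : PiLp 2 (fun _ : Fin 3 => H₀) →L[ℂ]
      PiLp 2 (fun _ : Fin 3 => H₀)) = 0 := fun c => by ext x; simp
  -- adjoints of the block matrices, as literals
  have a1 : adjoint (blk3 !![1 + W, 0, 1; 0, W, 0; 1, 0, 1 + W])
      = blk3 !![1 + star W, 0, 1; 0, star W, 0; 1, 0, 1 + star W] := by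
    rw [blk3_adjoint]
    refine congrArg blk3 ?_
    ext i j
    fin_cases i <;> fin_cases j <;>
      simp [← ContinuousLinearMap.star_eq_adjoint, Matrix.vecHead, Matrix.vecTail]
  have a2 : adjoint (blk3 !![W, 0, 1 + W; 0, 0, 0; 1 + W, 0, W])
      = blk3 !![star W, 0, 1 + star W; 0, 0, 0; 1 + star W, 0, star W] := by
    rw [blk3_adjoint]
    refine congrArg blk3 ?_
    ext i j
    fin_cases i <;> fin_cases j <;>
      simp [← ContinuousLinearMap.star_eq_adjoint, Matrix.vecHead, Matrix.vecTail]
  have a3 : adjoint (blk3 !![0, 0, W; 0, 0, 0; W, 0, 0])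
      = blk3 !![0, 0, star W; 0, 0, 0; star W, 0, 0] := by
    rw [blk3_adjoint]
    refine congrArg blk3 ?_
    ext i j
    fin_cases i <;> fin_cases j <;>
      simp [← ContinuousLinearMap.star_eq_adjoint, Matrix.vecHead, Matrix.vecTail]
  have aE : adjoint (blk3 !![0, 0, 0; 0, W, 0; 0, 0, 0])
      = blk3 !![0, 0, 0; 0, star W, 0; 0, 0, 0] := by
    rw [blk3_adjoint]
    refine congrArg blk3 ?_
    ext i j
    fin_cases i <;> fin_cases j <;>
      simp [← ContinuousLinearMap.star_eq_adjoint, Matrix.vecHead, Matrix.vecTail]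
  -- matrix-level identities
  have m1 : (!![1 + W, 0, 1; 0, W, 0; 1, 0, 1 + W] * !![W, 0, 1 + W; 0, 0, 0; 1 + W, 0, W] :
      Matrix (Fin 3) (Fin 3) (H₀ →L[ℂ] H₀))
      = !![W, 0, 1 + W; 0, 0, 0; 1 + W, 0, W] * !![1 + W, 0, 1; 0, W, 0; 1, 0, 1 + W] := by
    ext i j
    fin_cases i <;> fin_cases j <;>
      simp [Matrix.mul_apply, Fin.sum_univ_three, Matrix.vecHead, Matrix.vecTail,
        mul_add, add_mul] <;> first | noncomm_ring | abel
  have m2 : (!![1 + W, 0, 1; 0, W, 0; 1, 0, 1 + W] * !![0, 0, W; 0, 0, 0; W, 0, 0] :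
      Matrix (Fin 3) (Fin 3) (H₀ →L[ℂ] H₀))
      = !![0, 0, W; 0, 0, 0; W, 0, 0] * !![1 + W, 0, 1; 0, W, 0; 1, 0, 1 + W] := by
    ext i j
    fin_cases i <;> fin_cases j <;>
      simp [Matrix.mul_apply, Fin.sum_univ_three, Matrix.vecHead, Matrix.vecTail,
        mul_add, add_mul] <;> first | noncomm_ring | abel
  have m3 : (!![W, 0, 1 + W; 0, 0, 0; 1 + W, 0, W] * !![0, 0, W; 0, 0, 0; W, 0, 0] :
      Matrix (Fin 3) (Fin 3) (H₀ →L[ℂ] H₀))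
      = !![0, 0, W; 0, 0, 0; W, 0, 0] * !![W, 0, 1 + W; 0, 0, 0; 1 + W, 0, W] := by
    ext i j
    fin_cases i <;> fin_cases j <;>
      simp [Matrix.mul_apply, Fin.sum_univ_three, Matrix.vecHead, Matrix.vecTail,
        mul_add, add_mul] <;> first | noncomm_ring | abel
  have m4 : (!![0, 0, W; 0, 0, 0; W, 0, 0] * !![0, 0, star W; 0, 0, 0; star W, 0, 0] *
      !![0, 0, W; 0, 0, 0; W, 0, 0] : Matrix (Fin 3) (Fin 3) (H₀ →L[ℂ] H₀))
      = !![0, 0, W; 0, 0, 0; W, 0, 0] := by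
    ext i j
    fin_cases i <;> fin_cases j <;>
      simp [Matrix.mul_apply, Fin.sum_univ_three, Matrix.vecHead, Matrix.vecTail,
        mul_add, add_mul, mul_assoc, hW', hW2]
  have m5 : ((1 : Matrix (Fin 3) (Fin 3) (H₀ →L[ℂ] H₀)) -
      !![0, 0, star W; 0, 0, 0; star W, 0, 0] * !![0, 0, W; 0, 0, 0; W, 0, 0])
      = !![0, 0, 0; 0, 1, 0; 0, 0, 0] := by
    ext i j
    fin_cases i <;> fin_cases j <;>
      simp [Matrix.mul_apply, Fin.sum_univ_three, Matrix.sub_apply, Matrix.one_apply,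
        Matrix.vecHead, Matrix.vecTail, hW']
  have m6 : (!![1 + W, 0, 1; 0, W, 0; 1, 0, 1 + W] -
      !![star W, 0, 1 + star W; 0, 0, 0; 1 + star W, 0, star W] *
        !![0, 0, W; 0, 0, 0; W, 0, 0] : Matrix (Fin 3) (Fin 3) (H₀ →L[ℂ] H₀))
      = !![0, 0, 0; 0, W, 0; 0, 0, 0] := by
    ext i j
    fin_cases i <;> fin_cases j <;>
      simp [Matrix.mul_apply, Fin.sum_univ_three, Matrix.sub_apply, Matrix.vecHead,
        Matrix.vecTail, mul_add, add_mul, hW'] <;> first | noncomm_ring | abel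
  have m6b : (!![0, 0, 0; 0, 1, 0; 0, 0, 0] * !![0, 0, 0; 0, W, 0; 0, 0, 0] *
      !![0, 0, 0; 0, 1, 0; 0, 0, 0] : Matrix (Fin 3) (Fin 3) (H₀ →L[ℂ] H₀))
      = !![0, 0, 0; 0, W, 0; 0, 0, 0] := by
    ext i j
    fin_cases i <;> fin_cases j <;>
      simp [Matrix.mul_apply, Fin.sum_univ_three, Matrix.vecHead, Matrix.vecTail]
  have m7 : (!![W, 0, 1 + W; 0, 0, 0; 1 + W, 0, W] -
      !![1 + star W, 0, 1; 0, star W, 0; 1, 0, 1 + star W] *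
        !![0, 0, W; 0, 0, 0; W, 0, 0] : Matrix (Fin 3) (Fin 3) (H₀ →L[ℂ] H₀)) = 0 := by
    ext i j
    fin_cases i <;> fin_cases j <;>
      simp [Matrix.mul_apply, Fin.sum_univ_three, Matrix.sub_apply, Matrix.vecHead,
        Matrix.vecTail, mul_add, add_mul, hW'] <;> first | noncomm_ring | abel
  have m8 : (!![0, 0, 0; 0, star W, 0; 0, 0, 0] * !![0, 0, 0; 0, W, 0; 0, 0, 0] -
      !![0, 0, 0; 0, W, 0; 0, 0, 0] * !![0, 0, 0; 0, star W, 0; 0, 0, 0] :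
        Matrix (Fin 3) (Fin 3) (H₀ →L[ℂ] H₀))
      = !![0, 0, 0; 0, 1 - W * adjoint W, 0; 0, 0, 0] := by
    ext i j
    fin_cases i <;> fin_cases j <;>
      simp [Matrix.mul_apply, Fin.sum_univ_three, Matrix.sub_apply, Matrix.vecHead,
        Matrix.vecTail, ← ContinuousLinearMap.star_eq_adjoint, hW']
  -- operator-level consequences
  have hPe : (1 : PiLp 2 (fun _ : Fin 3 => H₀) →L[ℂ] PiLp 2 (fun _ : Fin 3 => H₀)) -
      adjoint (blk3 !![0, 0, W; 0, 0, 0; W, 0, 0]) * blk3 !![0, 0, W; 0, 0, 0; W, 0, 0]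
      = blk3 !![0, 0, 0; 0, 1, 0; 0, 0, 0] := by
    rw [a3, blk3_mul, ← blk3_one, blk3_sub, m5]
  have h8 : adjoint ((3 : ℂ)⁻¹ • blk3 !![0, 0, 0; 0, W, 0; 0, 0, 0]) *
        ((3 : ℂ)⁻¹ • blk3 !![0, 0, 0; 0, W, 0; 0, 0, 0]) -
        ((3 : ℂ)⁻¹ • blk3 !![0, 0, 0; 0, W, 0; 0, 0, 0]) *
          adjoint ((3 : ℂ)⁻¹ • blk3 !![0, 0, 0; 0, W, 0; 0, 0, 0]) =
      (9 : ℂ)⁻¹ • blk3 !![0, 0, 0; 0, 1 - W * adjoint W, 0; 0, 0, 0] := by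
    rw [adjsmul, c3, aE]
    simp only [smul_mul_assoc, mul_smul_comm, smul_smul, blk3_mul, h9, ← smul_sub,
      blk3_sub, m8]
  have h9' : adjoint ((3 : ℂ)⁻¹ • blk3 !![0, 0, 0; 0, W, 0; 0, 0, 0]) *
        ((3 : ℂ)⁻¹ • blk3 !![0, 0, 0; 0, W, 0; 0, 0, 0]) -
        ((3 : ℂ)⁻¹ • blk3 !![0, 0, 0; 0, W, 0; 0, 0, 0]) *
          adjoint ((3 : ℂ)⁻¹ • blk3 !![0, 0, 0; 0, W, 0; 0, 0, 0]) ≠ 0 := by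
    rw [h8]
    intro h
    apply hWco
    have hop : ∀ v : H₀, ((1 : H₀ →L[ℂ] H₀) - W * adjoint W) v = 0 := by
      intro v
      have h2 := congrArg (fun T : PiLp 2 (fun _ : Fin 3 => H₀) →L[ℂ]
        PiLp 2 (fun _ : Fin 3 => H₀) =>
          T ((WithLp.equiv 2 (∀ _ : Fin 3, H₀)).symm (Pi.single 1 v)) 1) h
      simp only [ContinuousLinearMap.smul_apply, PiLp.smul_apply, blk3_apply,
        ContinuousLinearMap.zero_apply, Pi.zero_apply] at h2
      have h3 : ∀ k, (!![0, 0, 0; 0, 1 - W * adjoint W, 0; 0, 0, 0] :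
          Matrix (Fin 3) (Fin 3) (H₀ →L[ℂ] H₀)) 1 k
            ((WithLp.equiv 2 (∀ _ : Fin 3, H₀)).symm (Pi.single 1 v) k)
          = if k = 1 then ((1 : H₀ →L[ℂ] H₀) - W * adjoint W) v else 0 := by
        intro k
        by_cases hk : k = 1 <;>
          simp [WithLp.equiv_symm_apply, PiLp.toLp_apply, Pi.single_apply, hk, Matrix.vecHead,
            Matrix.vecTail, Fin.sum_univ_three]
      rw [Finset.sum_congr rfl fun k _ => h3 k, Finset.sum_ite_eq'] at h2
      simp only [Finset.mem_univ, if_true] at h2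
      have h2' : (9 : ℂ)⁻¹ • (((1 : H₀ →L[ℂ] H₀) - W * adjoint W) v) = (0 : H₀) := h2
      have h5 := congrArg (fun w : H₀ => (9 : ℂ) • w) h2'
      simp only [smul_smul, smul_zero] at h5
      have h6 : ((9 : ℂ) * 9⁻¹) = 1 := by norm_num
      rwa [h6, one_smul] at h5
    ext v
    have h7 := hop v
    rw [ContinuousLinearMap.sub_apply, sub_eq_zero] at h7
    simpa using h7.symm
  refine ⟨⟨?_, ?_, ?_⟩, ⟨?_, ?_⟩, ⟨?_, ?_⟩, h8, h9', ?_, ?_⟩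
  · simp only [smul_mul_assoc, mul_smul_comm, blk3_mul, m1]
  · simp only [smul_mul_assoc, mul_smul_comm, blk3_mul, m2]
  · simp only [smul_mul_assoc, mul_smul_comm, blk3_mul, m3]
  · rw [a3, blk3_mul, blk3_mul, m4]
  · exact hPe
  · rw [hPe, adjsmul, c3, a2]
    simp only [smul_mul_assoc, mul_smul_comm, blk3_mul]
    rw [ssub, blk3_sub, m6, m6b]
  · rw [adjsmul, c3, a1]
    simp only [smul_mul_assoc, mul_smul_comm, blk3_mul]
    rw [ssub, blk3_sub, m7, blk3_zero, szero, mul_zero, zero_mul]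
  · simp
  · intro h
    apply h9'
    rw [h]
    simp
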